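/- For every x ∈ ℝ with x ≥ 1: the U-parity sequence 𝒫_U(x) is eventually periodic with period (0, 1) if, and only if, the U-trajectory of x tends to {1, 2}, i.e., {lim_{k→∞} U^{2k}(x), lim_{k→∞} U^{2k+1}(x)} = {1, 2}. -/
import Mathlib


/-- The real 3x+1 function: `Ux = x/2` if `⌊x⌋` is even, `(3x+1)/2` if `⌊x⌋` is odd. -/
noncomputable def U (x : ℝ) : ℝ := if Even ⌊x⌋ then x / 2 else (3 * x + 1) / 2

lemma U_of_even {x : ℝ} (h : Even ⌊x⌋) : U x = x / 2 := if_pos h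

lemma U_of_odd {x : ℝ} (h : ¬ Even ⌊x⌋) : U x = (3 * x + 1) / 2 := if_neg h

lemma U_ge_one {x : ℝ} (hx : 1 ≤ x) : 1 ≤ U x := by
  unfold U
  split_ifs with h
  · have h1 : (1:ℤ) ≤ ⌊x⌋ := Int.le_floor.mpr (by exact_mod_cast hx)
    have h2 : (2:ℤ) ≤ ⌊x⌋ := by rcases h with ⟨k, hk⟩; omega
    have h3 : ((2:ℤ):ℝ) ≤ (⌊x⌋:ℝ) := by exact_mod_cast h2
    have := Int.floor_le x
    push_cast at h3
    linarith
  · linarith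

lemma iter_ge_one {x : ℝ} (hx : 1 ≤ x) : ∀ n, 1 ≤ U^[n] x := by
  intro n
  induction n with
  | zero => simpa
  | succ n ih => rw [Function.iterate_succ_apply']; exact U_ge_one ih

lemma mainAux (x : ℝ) (hx : 1 ≤ x) (c : ℕ)
    (hA : Filter.Tendsto (fun k : ℕ => U^[2 * k + c] x) Filter.atTop (nhds 2))
    (hB : Filter.Tendsto (fun k : ℕ => U^[2 * k + c + 1] x) Filter.atTop (nhds 1)) :
    ∃ j : ℕ, ∀ m : ℕ,
        ⌊U^[j + 2 * m] x⌋ % 2 = 0 ∧ ⌊U^[j + 2 * m + 1] x⌋ % 2 = 1 := by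
  have hA' := hA.eventually
    (Ioo_mem_nhds (by norm_num : (3:ℝ)/2 < 2) (by norm_num : (2:ℝ) < 5/2))
  have hB' := hB.eventually (Iio_mem_nhds (by norm_num : (1:ℝ) < 3/2))
  obtain ⟨K, hK⟩ := Filter.eventually_atTop.mp (hA'.and hB')
  refine ⟨2 * K + c, ?_⟩
  intro m
  have hk := hK (K + m) (Nat.le_add_right _ _)
  set y := U^[2 * (K + m) + c] x with hy
  have hy1 : 1 ≤ y := iter_ge_one hx _
  have hUy : U^[2 * (K + m) + c + 1] x = U y := Function.iterate_succ_apply' _ _ _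
  have hylo : 3/2 < y := hk.1.1
  have hyhi : y < 5/2 := hk.1.2
  have hnext : U^[2 * (K + m) + c + 1] x < 3/2 := hk.2
  have heven : Even ⌊y⌋ := by
    by_contra hodd
    rw [hUy, U_of_odd hodd] at hnext
    linarith
  have hfl : ⌊y⌋ = 2 := by
    have h1 : (1:ℤ) ≤ ⌊y⌋ := Int.le_floor.mpr (by exact_mod_cast hy1)
    have h2 : (⌊y⌋:ℝ) ≤ y := Int.floor_le y
    have h3 : ⌊y⌋ < 3 := by
      have : (⌊y⌋:ℝ) < 3 := by linarith
      exact_mod_cast this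
    rcases heven with ⟨k, hk'⟩
    omega
  have hy2 : (2:ℝ) ≤ y := by
    have := Int.floor_le y
    rw [hfl] at this
    push_cast at this
    linarith
  have hUyval : U y = y / 2 := U_of_even heven
  have hfl2 : ⌊y / 2⌋ = 1 := by
    rw [Int.floor_eq_iff]
    constructor
    · push_cast; linarith
    · push_cast; linarith
  have e1 : 2 * K + c + 2 * m = 2 * (K + m) + c := by ring
  rw [e1]
  refine ⟨by rw [← hy, hfl]; rfl, ?_⟩
  rw [hUy, hUyval, hfl2]
  rfl

/-- For all `x ≥ 1`, the `U`-parity sequence of `x` is eventually periodic with period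
`(0,1)` iff the `U`-trajectory of `x` tends to `{1, 2}`. -/
theorem parity_period01_iff_tendsto_one_two (x : ℝ) (hx : 1 ≤ x) :
    (∃ j : ℕ, ∀ m : ℕ,
        ⌊U^[j + 2 * m] x⌋ % 2 = 0 ∧ ⌊U^[j + 2 * m + 1] x⌋ % 2 = 1) ↔
    (∃ L₀ L₁ : ℝ,
        Filter.Tendsto (fun k : ℕ => U^[2 * k] x) Filter.atTop (nhds L₀) ∧
        Filter.Tendsto (fun k : ℕ => U^[2 * k + 1] x) Filter.atTop (nhds L₁) ∧
        ({L₀, L₁} : Set ℝ) = {1, 2}) := by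
  constructor
  · rintro ⟨j, hj⟩
    have step : ∀ m : ℕ, U^[j + 2 * m + 1] x = U^[j + 2 * m] x / 2 ∧
        U^[j + 2 * (m + 1)] x = (3 * U^[j + 2 * m] x + 2) / 4 := by
      intro m
      have h0 := (hj m).1
      have h1 := (hj m).2
      have heven : Even ⌊U^[j + 2 * m] x⌋ := Int.even_iff.mpr h0
      have e1 : U^[j + 2 * m + 1] x = U^[j + 2 * m] x / 2 := by
        rw [Function.iterate_succ_apply', U_of_even heven]
      have hodd : ¬ Even ⌊U^[j + 2 * m + 1] x⌋ := by
        rw [Int.even_iff]; omega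
      refine ⟨e1, ?_⟩
      have e2 : j + 2 * (m + 1) = (j + 2 * m + 1) + 1 := by ring
      rw [e2, Function.iterate_succ_apply', U_of_odd hodd, e1]
      ring
    have geom : ∀ m : ℕ, U^[j + 2 * m] x = 2 + (3/4 : ℝ)^m * (U^[j] x - 2) := by
      intro m
      induction m with
      | zero => norm_num
      | succ m ih => rw [(step m).2, ih]; ring
    have t2 : Filter.Tendsto (fun m : ℕ => U^[j + 2 * m] x) Filter.atTop (nhds 2) := by
      have hgeo : Filter.Tendsto (fun m : ℕ => (3/4 : ℝ)^m * (U^[j] x - 2))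
          Filter.atTop (nhds 0) := by
        simpa using (tendsto_pow_atTop_nhds_zero_of_lt_one (by norm_num)
          (by norm_num : (3/4:ℝ) < 1)).mul_const (U^[j] x - 2)
      have h := (tendsto_const_nhds (α := ℕ) (x := (2:ℝ)) (f := Filter.atTop)).add hgeo
      rw [add_zero] at h
      exact h.congr (fun m => (geom m).symm)
    have t1 : Filter.Tendsto (fun m : ℕ => U^[j + 2 * m + 1] x) Filter.atTop (nhds 1) := by
      have h := t2.div_const 2
      norm_num at h
      exact h.congr (fun m => ((step m).1).symm)
    rcases Nat.even_or_odd j with ⟨a, ha⟩ | ⟨a, ha⟩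
    · refine ⟨2, 1, ?_, ?_, Set.pair_comm 2 1⟩
      · have compT : Filter.Tendsto (fun k : ℕ => U^[j + 2 * (k - a)] x)
            Filter.atTop (nhds 2) := t2.comp (Filter.tendsto_sub_atTop_nat a)
        refine Filter.Tendsto.congr' ?_ compT
        filter_upwards [Filter.eventually_ge_atTop a] with k hk
        congr 1
        omega
      · have compT : Filter.Tendsto (fun k : ℕ => U^[j + 2 * (k - a)] x / 2)
            Filter.atTop (nhds 1) := by
          have h := (t2.comp (Filter.tendsto_sub_atTop_nat a)).div_const 2
          norm_num at h
          exact h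
        refine Filter.Tendsto.congr' ?_ compT
        filter_upwards [Filter.eventually_ge_atTop a] with k hk
        have e : j + 2 * (k - a) = 2 * k := by omega
        rw [e]
        have e2 : 2 * k + 1 = (2 * k) + 1 := rfl
        rw [Function.iterate_succ_apply']
        have heven : Even ⌊U^[2 * k] x⌋ := by
          have := (hj (k - a)).1
          have e' : j + 2 * (k - a) = 2 * k := by omega
          rw [e'] at this
          exact Int.even_iff.mpr this
        rw [U_of_even heven]
    · refine ⟨1, 2, ?_, ?_, rfl⟩
      · have compT : Filter.Tendsto (fun k : ℕ => U^[j + 2 * (k - (a + 1)) + 1] x)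
            Filter.atTop (nhds 1) := t1.comp (Filter.tendsto_sub_atTop_nat (a + 1))
        refine Filter.Tendsto.congr' ?_ compT
        filter_upwards [Filter.eventually_ge_atTop (a + 1)] with k hk
        congr 1
        omega
      · have compT : Filter.Tendsto (fun k : ℕ => U^[j + 2 * (k - a)] x)
            Filter.atTop (nhds 2) := t2.comp (Filter.tendsto_sub_atTop_nat a)
        refine Filter.Tendsto.congr' ?_ compT
        filter_upwards [Filter.eventually_ge_atTop a] with k hk
        congr 1
        omega
  · rintro ⟨L₀, L₁, h0, h1, hset⟩
    have hL0 : L₀ = 1 ∨ L₀ = 2 := by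
      have : L₀ ∈ ({1, 2} : Set ℝ) := by rw [← hset]; exact Set.mem_insert _ _
      simpa using this
    have hL1 : L₁ = 1 ∨ L₁ = 2 := by
      have : L₁ ∈ ({1, 2} : Set ℝ) := by
        rw [← hset]; exact Set.mem_insert_of_mem _ rfl
      simpa using this
    rcases hL0 with h | h
    · subst h
      have hL1' : L₁ = 2 := by
        have h2 : (2:ℝ) = 1 ∨ (2:ℝ) = L₁ := by
          have : (2:ℝ) ∈ ({1, L₁} : Set ℝ) := by rw [hset]; norm_num
          simpa using this
        rcases h2 with h2 | h2
        · norm_num at h2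
        · exact h2.symm
      subst hL1'
      refine mainAux x hx 1 h1 ?_
      have hcomp := h0.comp (Filter.tendsto_add_atTop_nat 1)
      refine hcomp.congr fun k => ?_
      show U^[2 * (k + 1)] x = U^[2 * k + 1 + 1] x
      congr 1
    · subst h
      have hL1' : L₁ = 1 := by
        have h2 : (1:ℝ) = 2 ∨ (1:ℝ) = L₁ := by
          have : (1:ℝ) ∈ ({2, L₁} : Set ℝ) := by rw [hset]; norm_num
          simpa using this
        rcases h2 with h2 | h2
        · norm_num at h2
        · exact h2.symm
      subst hL1'
      exact mainAux x hx 0 (by simpa using h0) (by simpa using h1)
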